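/- For any two scalar functions f, g ∈ L²_loc and standard mollifier φ^l, the following commutator identity holds pointwise for x in the domain where the mollifications are defined: (fg)^l(x) = f^l(x) g^l(x) + ∫_{|y|≤l} φ^l(y) (f(x−y) − f(x)) (g(x−y) − g(x)) dy − (f(x) − f^l(x)) (g(x) − g^l(x)). -/
import Mathlib


open MeasureTheory Metric Set Filter ENNReal
open scoped Topology RealInnerProductSpace

noncomputable section

abbrev E3 : Type := EuclideanSpace ℝ (Fin 3)

/-- distance to the boundary of `Ω` -/
def dB (Ω : Set E3) (x : E3) : ℝ := Metric.infDist x (frontier Ω)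

/-- the boundary layer `Ω_ε = {x ∈ Ω : d(x) < ε}` -/
def layer (Ω : Set E3) (ε : ℝ) : Set E3 := {x ∈ Ω | dB Ω x < ε}

/-- the interior region `Ω^ε = {x ∈ Ω : d(x) > ε}` -/
def intr (Ω : Set E3) (ε : ℝ) : Set E3 := {x ∈ Ω | ε < dB Ω x}

/-- the scaled mollifier kernel  `φ^l(y) = l⁻³ φ(y/l)` -/
def mollK (φ : E3 → ℝ) (l : ℝ) (y : E3) : ℝ := l⁻¹ ^ 3 * φ (l⁻¹ • y)

/-- mollification of a vector field: `f^l(x) = ∫_{|y|≤l} φ^l(y) f(x-y) dy` -/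
def moll (φ : E3 → ℝ) (l : ℝ) (f : E3 → E3) (x : E3) : E3 :=
  ∫ y in Metric.closedBall (0 : E3) l, mollK φ l y • f (x - y)

/-- translation-based Besov seminorm `sup_{y} ‖f(·)-f(·-y)‖_{L³(S ∩ (S+y))}/|y|^α` -/
def besovSemi (α : ℝ) (S : Set E3) (f : E3 → E3) : ℝ≥0∞ :=
  ⨆ y : E3, eLpNorm (fun x => f x - f (x - y)) 3 (volume.restrict (S ∩ {x | x - y ∈ S}))
      / ENNReal.ofReal (‖y‖ ^ α)

/-- Besov norm `‖f‖_{L³(S)} + [f]_{B^α_{3,∞}(S)}` -/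
def besovNorm (α : ℝ) (S : Set E3) (f : E3 → E3) : ℝ≥0∞ :=
  eLpNorm f 3 (volume.restrict S) + besovSemi α S f

/-- Constantin–E–Titi commutator identity for products:
`(fg)^l(x) = f^l(x) g^l(x) + ∫ φ^l(y)(f(x−y)−f(x))(g(x−y)−g(x)) dy − (f(x)−f^l(x))(g(x)−g^l(x))`. -/
theorem stmt1 (φ : E3 → ℝ) (l : ℝ) (hl : 0 < l)
    (hφnonneg : ∀ x, 0 ≤ φ x) (hφsupp : Function.support φ ⊆ Metric.closedBall 0 1)
    (hunit : (∫ y in Metric.closedBall (0 : E3) l, mollK φ l y) = 1)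
    (f g : E3 → ℝ) (x : E3)
    (hf : IntegrableOn (fun y => mollK φ l y * f (x - y)) (Metric.closedBall (0 : E3) l))
    (hg : IntegrableOn (fun y => mollK φ l y * g (x - y)) (Metric.closedBall (0 : E3) l))
    (hfg : IntegrableOn (fun y => mollK φ l y * (f (x - y) * g (x - y)))
      (Metric.closedBall (0 : E3) l)) :
    (∫ y in Metric.closedBall (0 : E3) l, mollK φ l y * (f (x - y) * g (x - y)))
      = (∫ y in Metric.closedBall (0 : E3) l, mollK φ l y * f (x - y))
          * (∫ y in Metric.closedBall (0 : E3) l, mollK φ l y * g (x - y))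
        + (∫ y in Metric.closedBall (0 : E3) l,
            mollK φ l y * ((f (x - y) - f x) * (g (x - y) - g x)))
        - (f x - ∫ y in Metric.closedBall (0 : E3) l, mollK φ l y * f (x - y))
          * (g x - ∫ y in Metric.closedBall (0 : E3) l, mollK φ l y * g (x - y)) := by
  classical
  have hK : IntegrableOn (fun y => mollK φ l y) (Metric.closedBall (0 : E3) l) := by
    by_contra h
    rw [MeasureTheory.integral_undef h] at hunit
    norm_num at hunit
  have h1 : (fun y => mollK φ l y * ((f (x - y) - f x) * (g (x - y) - g x)))
      = fun y => (mollK φ l y * (f (x - y) * g (x - y)) - f x * (mollK φ l y * g (x - y)))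
        - (g x * (mollK φ l y * f (x - y)) - (f x * g x) * mollK φ l y) := by
    funext y; ring
  have key : (∫ y in Metric.closedBall (0 : E3) l,
      mollK φ l y * ((f (x - y) - f x) * (g (x - y) - g x)))
      = (∫ y in Metric.closedBall (0 : E3) l, mollK φ l y * (f (x - y) * g (x - y)))
        - f x * (∫ y in Metric.closedBall (0 : E3) l, mollK φ l y * g (x - y))
        - (g x * (∫ y in Metric.closedBall (0 : E3) l, mollK φ l y * f (x - y))
          - f x * g x) := by
    have hA : IntegrableOn (fun y => mollK φ l y * (f (x - y) * g (x - y))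
        - f x * (mollK φ l y * g (x - y))) (Metric.closedBall (0 : E3) l) :=
      hfg.sub (hg.const_mul (f x))
    have hB : IntegrableOn (fun y => g x * (mollK φ l y * f (x - y))
        - (f x * g x) * mollK φ l y) (Metric.closedBall (0 : E3) l) :=
      (hf.const_mul (g x)).sub (hK.const_mul (f x * g x))
    rw [h1, MeasureTheory.integral_sub hA hB,
      MeasureTheory.integral_sub hfg (hg.const_mul (f x)),
      MeasureTheory.integral_sub (hf.const_mul (g x)) (hK.const_mul (f x * g x)),
      MeasureTheory.integral_const_mul, MeasureTheory.integral_const_mul,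
      MeasureTheory.integral_const_mul, hunit, mul_one]
  rw [key]; ring
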